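/- Let t, s, a, b, c, d be integers with a + t ≥ b ≥ a + s and c + t ≥ d ≥ c + s. The number of lattice paths from (a,b) to (c,d) using unit steps right or up that stay weakly below the line y = x + t and weakly above the line y = x + s equals Σ_{k ∈ ℤ} [ C(c+d-a-b, c-a-k(t-s+2)) - C(c+d-a-b, c-b-k(t-s+2)+t+1) ], where C denotes the binomial coefficient (with C(n,m)=0 when m<0 or m>n). -/

import Mathlib

/-- A step is a unit step right `(1,0)` or up `(0,1)`. -/
def IsStep (s : ℤ × ℤ) : Prop := s = (1, 0) ∨ s = (0, 1)

/-- The list of lattice points visited by a path starting at `(a,b)` with step list `l`. -/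
def pathPoints (a b : ℤ) (l : List (ℤ × ℤ)) : List (ℤ × ℤ) :=
  l.scanl (fun p s => (p.1 + s.1, p.2 + s.2)) (a, b)

/-- A right/up lattice path from `(a,b)` to `(c,d)` staying weakly below `y = x + t`
and weakly above `y = x + s`. -/
def IsConfinedPath (t s a b c d : ℤ) (l : List (ℤ × ℤ)) : Prop :=
  (∀ x ∈ l, IsStep x) ∧ (pathPoints a b l).getLast? = some (c, d) ∧
    ∀ p ∈ pathPoints a b l, p.1 + s ≤ p.2 ∧ p.2 ≤ p.1 + t

/-- Binomial coefficient with integer arguments, zero when `m < 0` or `m > n`. -/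
def chooseZ (n m : ℤ) : ℤ :=
  if 0 ≤ m ∧ m ≤ n then (n.toNat.choose m.toNat : ℤ) else 0


lemma chooseZ_of_neg {n : ℤ} (m : ℤ) (h : n < 0) : chooseZ n m = 0 := by
  unfold chooseZ; rw [if_neg (by omega)]

lemma chooseZ_pascal (n m : ℤ) (h : 1 ≤ n) :
    chooseZ n m = chooseZ (n-1) (m-1) + chooseZ (n-1) m := by
  unfold chooseZ
  by_cases hm : 1 ≤ m ∧ m ≤ n - 1
  · rw [if_pos (by omega), if_pos (by omega), if_pos (by omega)]
    have h1 : n.toNat = (n-1).toNat + 1 := by omega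
    have h2 : m.toNat = (m-1).toNat + 1 := by omega
    rw [h1, h2, Nat.choose_succ_succ]
    push_cast
    ring
  · rcases lt_trichotomy m 0 with h0 | h0 | h0
    · rw [if_neg (by omega), if_neg (by omega), if_neg (by omega)]; ring
    · rw [if_pos (by omega), if_neg (by omega), if_pos (by omega)]
      simp [h0]
    · by_cases hmn : m = n
      · rw [if_pos (by omega), if_pos (by omega), if_neg (by omega)]
        have e1 : m.toNat = n.toNat := by omega
        have e2 : (m-1).toNat = (n-1).toNat := by omega
        rw [e1, e2, Nat.choose_self, Nat.choose_self]
        ring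
      · rw [if_neg (by omega), if_neg (by omega), if_neg (by omega)]; ring

lemma chooseZ_symm (n m : ℤ) (h : 0 ≤ n) : chooseZ n m = chooseZ n (n - m) := by
  unfold chooseZ
  by_cases hm : 0 ≤ m ∧ m ≤ n
  · rw [if_pos hm, if_pos (by omega)]
    have h1 : (n - m).toNat = n.toNat - m.toNat := by omega
    rw [h1, Nat.choose_symm (by omega)]
  · rw [if_neg hm, if_neg (by omega)]

lemma chooseZ_zero (m : ℤ) : chooseZ 0 m = if m = 0 then 1 else 0 := by
  unfold chooseZ
  by_cases h : m = 0
  · subst h; simp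
  · rw [if_neg (by omega), if_neg h]

lemma chooseZ_support_finite (n x P : ℤ) (hP : 1 ≤ P) :
    (Function.support fun k : ℤ => chooseZ n (x - k * P)).Finite := by
  apply Set.Finite.subset (Set.finite_Icc (min (x - n) 0) (max x 0))
  intro k hk
  simp only [Function.mem_support] at hk
  have h1 : 0 ≤ x - k * P ∧ x - k * P ≤ n := by
    by_contra h
    exact hk (by unfold chooseZ; rw [if_neg h])
  simp only [Set.mem_Icc, le_max_iff, min_le_iff]
  rcases le_or_gt 0 k with h | h
  · have hk1 : k ≤ k * P := by nlinarith
    exact ⟨Or.inr h, Or.inl (by omega)⟩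
  · have hk1 : k * P ≤ k := by nlinarith
    exact ⟨Or.inl (by omega), Or.inr (by omega)⟩


lemma pathPoints_nil (a b : ℤ) : pathPoints a b [] = [(a, b)] := rfl

lemma pathPoints_cons (a b : ℤ) (x : ℤ × ℤ) (l : List (ℤ × ℤ)) :
    pathPoints a b (x :: l) = (a, b) :: pathPoints (a + x.1) (b + x.2) l := by
  simp [pathPoints, List.scanl_cons]

lemma pathPoints_ne_nil (a b : ℤ) (l : List (ℤ × ℤ)) : pathPoints a b l ≠ [] := by
  cases l <;> simp [pathPoints_nil, pathPoints_cons]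

lemma head_mem_pathPoints (a b : ℤ) (l : List (ℤ × ℤ)) : (a, b) ∈ pathPoints a b l := by
  cases l <;> simp [pathPoints_nil, pathPoints_cons]

lemma pathPoints_last_sum (l : List (ℤ × ℤ)) : ∀ a b c d : ℤ, (∀ x ∈ l, IsStep x) →
    (pathPoints a b l).getLast? = some (c, d) → c + d = a + b + l.length := by
  induction l with
  | nil =>
    intro a b c d _ h
    rw [pathPoints_nil] at h
    simp at h
    simp [h.1, h.2]
  | cons x l ih =>
    intro a b c d hsteps h
    rw [pathPoints_cons] at h
    obtain ⟨p, L, hpl⟩ : ∃ p L, pathPoints (a + x.1) (b + x.2) l = p :: L := by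
      cases hl : pathPoints (a + x.1) (b + x.2) l with
      | nil => exact absurd hl (pathPoints_ne_nil _ _ _)
      | cons p L => exact ⟨p, L, rfl⟩
    rw [hpl, List.getLast?_cons_cons, ← hpl] at h
    have hx : x.1 + x.2 = 1 := by
      rcases hsteps x (by simp) with h' | h' <;> simp [h']
    have := ih (a + x.1) (b + x.2) c d (fun y hy => hsteps y (by simp [hy])) h
    simp only [List.length_cons]
    push_cast
    push_cast at this
    omega

lemma icp_length {t s a b c d : ℤ} {l : List (ℤ × ℤ)} (h : IsConfinedPath t s a b c d l) :
    (l.length : ℤ) = c + d - a - b := by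
  have := pathPoints_last_sum l a b c d h.1 h.2.1
  omega

lemma icp_finite (t s a b c d : ℤ) : Finite {l : List (ℤ × ℤ) // IsConfinedPath t s a b c d l} := by
  set n := (c + d - a - b).toNat with hn
  have hfin : {l : List Bool | l.length = n}.Finite := List.finite_length_eq Bool n
  haveI := hfin.to_subtype
  apply Finite.of_injective
    (f := fun x : {l : List (ℤ × ℤ) // IsConfinedPath t s a b c d l} =>
      (⟨x.1.map (fun p => decide (p = ((1:ℤ), (0:ℤ)))), by
        simp only [Set.mem_setOf_eq, List.length_map]
        have := icp_length x.2
        omega⟩ : {l : List Bool | l.length = n}))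
  intro x y hxy
  simp only [Subtype.mk.injEq] at hxy
  apply Subtype.ext
  have key : ∀ (l₁ l₂ : List (ℤ × ℤ)), (∀ x ∈ l₁, IsStep x) → (∀ x ∈ l₂, IsStep x) →
      l₁.map (fun p => decide (p = ((1:ℤ), (0:ℤ)))) = l₂.map (fun p => decide (p = ((1:ℤ), (0:ℤ)))) →
      l₁ = l₂ := by
    intro l₁
    induction l₁ with
    | nil => intro l₂ _ _ h; cases l₂ <;> simp_all
    | cons x l ih =>
      intro l₂ h1 h2 h
      cases l₂ with
      | nil => simp at h
      | cons y l' =>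
        simp only [List.map_cons, List.cons.injEq] at h
        have hxy' : x = y := by
          rcases h1 x (by simp) with hx | hx <;> rcases h2 y (by simp) with hy | hy <;>
            simp_all
        rw [hxy', ih l' (fun z hz => h1 z (by simp [hz])) (fun z hz => h2 z (by simp [hz])) h.2]
  exact key x.1 y.1 x.2.1 y.2.1 hxy

lemma pathPoints_exists_cons (a b : ℤ) (l : List (ℤ × ℤ)) :
    ∃ p L, pathPoints a b l = p :: L := by
  cases hl : pathPoints a b l with
  | nil => exact absurd hl (pathPoints_ne_nil _ _ _)
  | cons p L => exact ⟨p, L, rfl⟩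

lemma icp_cons {t s a b c d : ℤ} {l : List (ℤ × ℤ)} (x : ℤ × ℤ) (hx : IsStep x)
    (h : IsConfinedPath t s (a + x.1) (b + x.2) c d l)
    (hb1 : a + s ≤ b) (hb2 : b ≤ a + t) :
    IsConfinedPath t s a b c d (x :: l) := by
  obtain ⟨hsteps, hlast, hband⟩ := h
  refine ⟨?_, ?_, ?_⟩
  · intro y hy
    rcases List.mem_cons.mp hy with h | h
    · exact h ▸ hx
    · exact hsteps y h
  · rw [pathPoints_cons]
    obtain ⟨p, L, hpl⟩ := pathPoints_exists_cons (a + x.1) (b + x.2) l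
    rw [hpl, List.getLast?_cons_cons, ← hpl]
    exact hlast
  · intro p hp
    rw [pathPoints_cons, List.mem_cons] at hp
    rcases hp with h | h
    · rw [h]; exact ⟨hb1, hb2⟩
    · exact hband p h

lemma icp_uncons {t s a b c d : ℤ} {x : ℤ × ℤ} {l : List (ℤ × ℤ)}
    (h : IsConfinedPath t s a b c d (x :: l)) :
    IsConfinedPath t s (a + x.1) (b + x.2) c d l := by
  obtain ⟨hsteps, hlast, hband⟩ := h
  refine ⟨fun y hy => hsteps y (by simp [hy]), ?_, ?_⟩
  · rw [pathPoints_cons] at hlast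
    obtain ⟨p, L, hpl⟩ := pathPoints_exists_cons (a + x.1) (b + x.2) l
    rw [hpl, List.getLast?_cons_cons, ← hpl] at hlast
    exact hlast
  · intro p hp
    exact hband p (by rw [pathPoints_cons]; exact List.mem_cons_of_mem _ hp)

lemma card_out {t s a b c d : ℤ} (h : b < a + s ∨ a + t < b) :
    Nat.card {l : List (ℤ × ℤ) // IsConfinedPath t s a b c d l} = 0 := by
  haveI : IsEmpty {l : List (ℤ × ℤ) // IsConfinedPath t s a b c d l} := ⟨fun x => by
    have := x.2.2.2 (a, b) (head_mem_pathPoints a b x.1)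
    simp at this
    omega⟩
  exact Nat.card_of_isEmpty

lemma card_base {t s a b c d : ℤ} (hb1 : a + s ≤ b) (hb2 : b ≤ a + t)
    (heq : c + d ≤ a + b) :
    Nat.card {l : List (ℤ × ℤ) // IsConfinedPath t s a b c d l}
      = if a = c ∧ b = d then 1 else 0 := by
  by_cases hac : a = c ∧ b = d
  · rw [if_pos hac]
    obtain ⟨h1, h2⟩ := hac
    subst h1
    subst h2
    haveI : Unique {l : List (ℤ × ℤ) // IsConfinedPath t s a b a b l} :=
      { default := ⟨[], ⟨by simp, by rw [pathPoints_nil]; simp,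
          fun p hp => by rw [pathPoints_nil] at hp; simp at hp; rw [hp]; exact ⟨hb1, hb2⟩⟩⟩,
        uniq := fun x => Subtype.ext (by
          have h1 := icp_length x.2
          have h2 : x.1.length = 0 := by omega
          exact List.length_eq_zero_iff.mp h2) }
    exact Nat.card_unique
  · rw [if_neg hac]
    haveI : IsEmpty {l : List (ℤ × ℤ) // IsConfinedPath t s a b c d l} := ⟨fun x => by
      have h1 := icp_length x.2
      have h2 : x.1.length = 0 := by omega
      have h3 : x.1 = [] := List.length_eq_zero_iff.mp h2
      have h4 := x.2.2.1
      rw [h3, pathPoints_nil] at h4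
      simp at h4
      exact hac ⟨h4.1, h4.2⟩⟩
    exact Nat.card_of_isEmpty

lemma card_rec (t s a b c d : ℤ) (hb1 : a + s ≤ b) (hb2 : b ≤ a + t) (hlt : a + b < c + d) :
    Nat.card {l : List (ℤ × ℤ) // IsConfinedPath t s a b c d l}
      = Nat.card {l : List (ℤ × ℤ) // IsConfinedPath t s (a+1) b c d l}
        + Nat.card {l : List (ℤ × ℤ) // IsConfinedPath t s a (b+1) c d l} := by
  haveI := icp_finite t s a b c d
  haveI := icp_finite t s (a+1) b c d
  haveI := icp_finite t s a (b+1) c d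
  rw [← Nat.card_sum]
  symm
  apply Nat.card_eq_of_bijective
    (f := Sum.elim
      (fun p : {l : List (ℤ × ℤ) // IsConfinedPath t s (a+1) b c d l} =>
        (⟨((1:ℤ),(0:ℤ)) :: p.1, icp_cons _ (Or.inl rfl) (by simpa using p.2) hb1 hb2⟩ :
          {l : List (ℤ × ℤ) // IsConfinedPath t s a b c d l}))
      (fun p : {l : List (ℤ × ℤ) // IsConfinedPath t s a (b+1) c d l} =>
        (⟨((0:ℤ),(1:ℤ)) :: p.1, icp_cons _ (Or.inr rfl) (by simpa using p.2) hb1 hb2⟩ :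
          {l : List (ℤ × ℤ) // IsConfinedPath t s a b c d l})))
  constructor
  · rintro (⟨l, hl⟩ | ⟨l, hl⟩) (⟨m, hm⟩ | ⟨m, hm⟩) h <;>
      simp only [Sum.elim_inl, Sum.elim_inr, Subtype.mk.injEq, List.cons.injEq,
        Prod.mk.injEq] at h
    · exact congrArg Sum.inl (Subtype.ext h.2)
    · exact absurd h.1.1 (by norm_num)
    · exact absurd h.1.1 (by norm_num)
    · exact congrArg Sum.inr (Subtype.ext h.2)
  · rintro ⟨l, hl⟩
    have hne : l ≠ [] := by
      intro h0
      have := icp_length hl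
      rw [h0] at this
      simp at this
      omega
    obtain ⟨x, l', rfl⟩ := List.exists_cons_of_ne_nil hne
    have hx := hl.1 x (by simp)
    have h' := icp_uncons hl
    rcases hx with hx | hx
    · exact ⟨Sum.inl ⟨l', by rw [hx] at h'; simpa using h'⟩,
        by apply Subtype.ext; simp [hx]⟩
    · exact ⟨Sum.inr ⟨l', by rw [hx] at h'; simpa using h'⟩,
        by apply Subtype.ext; simp [hx]⟩

noncomputable def Fc (t s a b c d : ℤ) : ℤ :=
  ∑ᶠ k : ℤ, (chooseZ (c + d - a - b) (c - a - k * (t - s + 2))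
    - chooseZ (c + d - a - b) (c - b - k * (t - s + 2) + t + 1))

lemma support_finite' (n x P : ℤ) (hP : 1 ≤ P) (f : ℤ → ℤ)
    (hf : ∀ k, f k = chooseZ n (x - k * P)) :
    (Function.support f).Finite := by
  have : f = fun k => chooseZ n (x - k * P) := funext hf
  rw [this]; exact chooseZ_support_finite n x P hP

lemma support_sub_finite (n x y P : ℤ) (hP : 1 ≤ P) (f : ℤ → ℤ)
    (hf : ∀ k, f k = chooseZ n (x - k * P) - chooseZ n (y - k * P)) :
    (Function.support f).Finite := by
  apply Set.Finite.subset
    ((chooseZ_support_finite n x P hP).union (chooseZ_support_finite n y P hP))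
  intro k hk
  simp only [Function.mem_support, hf] at hk
  by_contra h
  simp only [Set.mem_union, Function.mem_support, not_or, not_not] at h
  rw [h.1, h.2] at hk
  simp at hk

lemma Fc_pascal (t s a b c d : ℤ) (hts : s ≤ t) (hn : a + b + 1 ≤ c + d) :
    Fc t s a b c d = Fc t s (a+1) b c d + Fc t s a (b+1) c d := by
  set P := t - s + 2 with hPdef
  have hP : 1 ≤ P := by omega
  have hn1 : 1 ≤ c + d - a - b := by omega
  unfold Fc
  have key : ∀ k : ℤ,
      chooseZ (c + d - a - b) (c - a - k * (t - s + 2))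
        - chooseZ (c + d - a - b) (c - b - k * (t - s + 2) + t + 1)
      = (chooseZ (c + d - (a+1) - b) (c - (a+1) - k * (t - s + 2))
          - chooseZ (c + d - (a+1) - b) (c - b - k * (t - s + 2) + t + 1))
        + (chooseZ (c + d - a - (b+1)) (c - a - k * (t - s + 2))
          - chooseZ (c + d - a - (b+1)) (c - (b+1) - k * (t - s + 2) + t + 1)) := by
    intro k
    rw [chooseZ_pascal _ (c - a - k * (t - s + 2)) hn1,
        chooseZ_pascal _ (c - b - k * (t - s + 2) + t + 1) hn1,
        show c - (a+1) - k * (t - s + 2) = c - a - k * (t - s + 2) - 1 from by ring,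
        show c - (b+1) - k * (t - s + 2) + t + 1 = c - b - k * (t - s + 2) + t + 1 - 1 from by ring,
        show c + d - (a+1) - b = c + d - a - b - 1 from by ring,
        show c + d - a - (b+1) = c + d - a - b - 1 from by ring]
    ring
  rw [finsum_congr key]
  apply finsum_add_distrib
  · apply support_sub_finite (c + d - (a+1) - b) (c - (a+1)) (c - b + t + 1) P hP
    intro k; rw [hPdef]; ring_nf
  · apply support_sub_finite (c + d - a - (b+1)) (c - a) (c - (b+1) + t + 1) P hP
    intro k; rw [hPdef]; ring_nf

lemma Fc_top (t s a b c d : ℤ) (hb : b = a + t + 1) : Fc t s a b c d = 0 := by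
  unfold Fc
  have key : ∀ k : ℤ,
      chooseZ (c + d - a - b) (c - a - k * (t - s + 2))
        - chooseZ (c + d - a - b) (c - b - k * (t - s + 2) + t + 1) = 0 := by
    intro k
    rw [show c - b - k * (t - s + 2) + t + 1 = c - a - k * (t - s + 2) from by omega]
    ring
  rw [finsum_congr key, finsum_zero]

lemma Fc_bot (t s a b c d : ℤ) (hts : s ≤ t) (hb : b = a + s - 1) : Fc t s a b c d = 0 := by
  set P := t - s + 2 with hPdef
  have hP : 1 ≤ P := by omega
  unfold Fc
  set f : ℤ → ℤ := fun k => chooseZ (c + d - a - b) (c - a - k * (t - s + 2)) with hf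
  have key : ∀ k : ℤ,
      chooseZ (c + d - a - b) (c - a - k * (t - s + 2))
        - chooseZ (c + d - a - b) (c - b - k * (t - s + 2) + t + 1)
      = f k - f (k - 1) := by
    intro k
    have : c - b - k * (t - s + 2) + t + 1 = c - a - (k - 1) * (t - s + 2) := by
      rw [hb]; ring
    rw [this, hf]
  rw [finsum_congr key]
  have hfin : (Function.support f).Finite :=
    support_finite' (c + d - a - b) (c - a) P hP f (fun k => by rw [hf, hPdef])
  have hfin2 : (Function.support fun k => f (k - 1)).Finite := by
    have : (Function.support fun k => f (k - 1)) = (· - (1:ℤ)) ⁻¹' (Function.support f) := by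
      ext k; simp [Function.mem_support]
    rw [this]
    exact hfin.preimage (fun x _ y _ h => by omega)
  rw [finsum_sub_distrib hfin hfin2]
  have : ∑ᶠ k : ℤ, f (k - 1) = ∑ᶠ k : ℤ, f k := finsum_comp_equiv (Equiv.subRight (1:ℤ))
  rw [this, sub_self]

lemma mult_not_in_Ioo {P m k : ℤ} (hP : 0 < P) (h1 : 0 < m) (h2 : m < P) : k * P ≠ m := by
  intro h
  rcases le_or_gt k 0 with hk | hk
  · nlinarith
  · have : 1 ≤ k := hk
    nlinarith

lemma Fc_base (t s a b c d : ℤ) (hts : s ≤ t) (heq : c + d = a + b)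
    (hb₁ : a + s ≤ b) (hb₂ : b ≤ a + t) (hd₁ : c + s ≤ d) (hd₂ : d ≤ c + t) :
    Fc t s a b c d = if a = c ∧ b = d then 1 else 0 := by
  have hP : 0 < t - s + 2 := by omega
  have hn : c + d - a - b = 0 := by omega
  unfold Fc
  rw [hn]
  have h2ca : 2 * (c - a) = (b - a) - (d - c) := by omega
  have hfirst : ∀ k : ℤ, k ≠ 0 ∨ c ≠ a → chooseZ 0 (c - a - k * (t - s + 2)) = 0 := by
    intro k hk0
    rw [chooseZ_zero, if_neg]
    intro h
    have hk' : k * (t - s + 2) = c - a := by omega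
    rcases lt_trichotomy k 0 with h0 | h0 | h0
    · have hkk : k * (t - s + 2) ≤ (-1) * (t - s + 2) :=
        mul_le_mul_of_nonneg_right (by omega) (by omega)
      omega
    · subst h0
      simp at hk'
      omega
    · have hkk : 1 * (t - s + 2) ≤ k * (t - s + 2) :=
        mul_le_mul_of_nonneg_right (by omega) (by omega)
      omega
  have hsecond : ∀ k : ℤ, chooseZ 0 (c - b - k * (t - s + 2) + t + 1) = 0 := by
    intro k
    rw [chooseZ_zero, if_neg]
    intro h
    have hk : k * (t - s + 2) = c - b + t + 1 := by omega
    have h1 : 0 < c - b + t + 1 := by omega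
    have h2 : c - b + t + 1 < t - s + 2 := by omega
    exact mult_not_in_Ioo hP h1 h2 hk
  by_cases hca : c = a
  · have hdb : d = b := by omega
    rw [if_pos ⟨hca.symm, hdb.symm⟩]
    have hz : (fun k : ℤ => chooseZ 0 (c - a - k * (t - s + 2))
        - chooseZ 0 (c - b - k * (t - s + 2) + t + 1))
      = fun k : ℤ => chooseZ 0 (c - a - k * (t - s + 2)) :=
        funext fun k => by rw [hsecond k]; ring
    rw [hz, finsum_eq_single _ (0 : ℤ)]
    · rw [show c - a - 0 * (t - s + 2) = 0 from by omega, chooseZ_zero, if_pos rfl]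
    · intro k hk
      exact hfirst k (Or.inl hk)
  · have hz : (fun k : ℤ => chooseZ 0 (c - a - k * (t - s + 2))
        - chooseZ 0 (c - b - k * (t - s + 2) + t + 1)) = fun _ : ℤ => (0:ℤ) := by
      funext k
      rw [hsecond k, hfirst k (Or.inr (fun h => hca h)), sub_zero]
    rw [hz, finsum_zero, if_neg (fun h => hca h.1.symm)]

lemma Fc_neg (t s a b c d : ℤ) (h : c + d < a + b) : Fc t s a b c d = 0 := by
  unfold Fc
  have hz : (fun k : ℤ => chooseZ (c + d - a - b) (c - a - k * (t - s + 2))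
      - chooseZ (c + d - a - b) (c - b - k * (t - s + 2) + t + 1)) = fun _ : ℤ => (0:ℤ) := by
    funext k
    rw [chooseZ_of_neg _ (by omega), chooseZ_of_neg _ (by omega)]
    ring
  rw [hz, finsum_zero]

lemma main_aux (t s c d : ℤ) (hts : s ≤ t) (hd1 : c + s ≤ d) (hd2 : d ≤ c + t) :
    ∀ n : ℕ, ∀ a b : ℤ, a + s ≤ b → b ≤ a + t → c + d - a - b = n →
      (Nat.card {l : List (ℤ × ℤ) // IsConfinedPath t s a b c d l} : ℤ) = Fc t s a b c d := by
  intro n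
  induction n with
  | zero =>
    intro a b h1 h2 h3
    rw [card_base h1 h2 (by omega), Fc_base t s a b c d hts (by omega) h1 h2 hd1 hd2]
    split_ifs <;> simp
  | succ n ih =>
    intro a b h1 h2 h3
    rw [card_rec t s a b c d h1 h2 (by omega), Fc_pascal t s a b c d hts (by omega)]
    push_cast
    have e1 : (Nat.card {l : List (ℤ × ℤ) // IsConfinedPath t s (a+1) b c d l} : ℤ)
        = Fc t s (a+1) b c d := by
      by_cases hb : a + 1 + s ≤ b
      · exact ih (a+1) b hb (by omega) (by omega)
      · rw [card_out (Or.inl (by omega)), Fc_bot t s (a+1) b c d hts (by omega)]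
        simp
    have e2 : (Nat.card {l : List (ℤ × ℤ) // IsConfinedPath t s a (b+1) c d l} : ℤ)
        = Fc t s a (b+1) c d := by
      by_cases hb : b + 1 ≤ a + t
      · exact ih a (b+1) (by omega) hb (by omega)
      · rw [card_out (Or.inr (by omega)), Fc_top t s a (b+1) c d (by omega)]
        simp
    rw [e1, e2]

theorem stmt_4 (t s a b c d : ℤ)
    (hb₁ : b ≤ a + t) (hb₂ : a + s ≤ b) (hd₁ : d ≤ c + t) (hd₂ : c + s ≤ d) :
    (Nat.card {l : List (ℤ × ℤ) // IsConfinedPath t s a b c d l} : ℤ)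
      = ∑ᶠ k : ℤ, (chooseZ (c + d - a - b) (c - a - k * (t - s + 2))
          - chooseZ (c + d - a - b) (c - b - k * (t - s + 2) + t + 1)) := by
  have hts : s ≤ t := by omega
  have key : (Nat.card {l : List (ℤ × ℤ) // IsConfinedPath t s a b c d l} : ℤ)
      = Fc t s a b c d := by
    rcases le_or_gt (a + b) (c + d) with h | h
    · exact main_aux t s c d hts hd₂ hd₁ (c + d - a - b).toNat a b hb₂ hb₁ (by omega)
    · rw [card_base hb₂ hb₁ (by omega), Fc_neg t s a b c d h, if_neg (by omega)]
      simp
  exact key
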